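/- Let Q be a 2×2 matrix potential with Q₁₁ = Q₂₂ = 0 and Q₁₂ = ±Q₂₁ ∈ L^p(ℝ²), p > 2, compactly supported, and let k ∉ ℰ. Then the unique solution μ of the integral equation μ(z,k) = I + (1/π)∫_{ℝ²} (e^{−Re(ik̄z')}/(z−z')) Q(z') μ̄(z',k) dz'_R dz'_I satisfies μ₁₁ = μ₂₂ and μ₁₂ = ±μ₂₁. -/

import Mathlib

open MeasureTheory Complex Filter Metric Set

noncomputable section

attribute [local instance] Matrix.normedAddCommGroup Matrix.normedSpace

/-- 2×2 complex matrices. -/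
abbrev M2 : Type := Matrix (Fin 2) (Fin 2) ℂ

/-- Off-diagonal part of a 2×2 matrix. -/
def PiO (M : M2) : M2 := Matrix.of fun i j => if i = j then 0 else M i j

/-- Diagonal part of a 2×2 matrix. -/
def PiD (M : M2) : M2 := Matrix.of fun i j => if i = j then M i j else 0

/-- Entrywise complex conjugation of a 2×2 matrix. -/
def matConj (M : M2) : M2 := Matrix.of fun i j => (starRingEnd ℂ) (M i j)

/-- The exterior `ℂ ∖ D` of the disk `D` of radius `A`. -/
def extD (A : ℝ) : Set ℂ := {ς : ℂ | A ≤ ‖ς‖}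

/-- Parametrization of the circle `∂D` of radius `A`. -/
def circ (A : ℝ) (θ : ℝ) : ℂ := (A : ℂ) * Complex.exp (θ * Complex.I)

/-- Membership in the space `ℋ^s`: entries in `L^s(ℝ²)` and continuous
on the closed disk of radius `A`. -/
def memHs (s A : ℝ) (φ : ℂ → M2) : Prop :=
  MemLp φ (ENNReal.ofReal s) (volume : Measure ℂ) ∧
  ContinuousOn φ (closedBall (0 : ℂ) A)

/-- The norm of `ℋ^s`. -/
def HsNorm (s A : ℝ) (φ : ℂ → M2) : ℝ :=
  (eLpNorm φ (ENNReal.ofReal s) (volume : Measure ℂ)).toReal +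
  ⨆ k : closedBall (0 : ℂ) A, ‖φ (k : ℂ)‖

/-- The operator norm of a map on `ℋ^s`. -/
def opNormHs (s A : ℝ) (T : (ℂ → M2) → ℂ → M2) : ℝ :=
  ⨆ φ : {φ : ℂ → M2 // memHs s A φ ∧ HsNorm s A φ ≤ 1}, HsNorm s A (T φ.1)

/-- Compactness of an operator on `ℋ^s`: any bounded sequence in `ℋ^s` has a
subsequence whose image converges in the `ℋ^s` norm to an element of `ℋ^s`. -/
def IsCompactOnHs (s A : ℝ) (T : (ℂ → M2) → ℂ → M2) : Prop :=
  ∀ φ : ℕ → ℂ → M2, (∀ n, memHs s A (φ n)) → (∃ M, ∀ n, HsNorm s A (φ n) ≤ M) →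
    ∃ (g : ℂ → M2) (σ : ℕ → ℕ), StrictMono σ ∧ memHs s A g ∧
      Tendsto (fun n => HsNorm s A (fun k => T (φ (σ n)) k - g k)) atTop (nhds 0)

/-- The integrand of the boundary (`∂D × ∂D`) part of the operators `T_z` and `𝒞`:
`e^{i(ς z̄ + ς̄' z)/2} φ̄⁻(ς') Π°[w h dς̄'] + e^{i(ς−ς') z̄/2} φ⁻(ς') Π^d 𝐂[w h dς̄']`,
written in the parametrization `ς = circ A θ`, `ς' = circ A θ'` (so that
`dς̄' = conj (i A e^{iθ'}) dθ'`), with the matrix factor `φ` on the left. -/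
def bKer (A : ℝ) (h : ℂ → ℂ → M2) (w : ℂ → ℂ → ℂ) (z : ℂ) (φ : ℂ → M2) (θ θ' : ℝ) : M2 :=
  ((starRingEnd ℂ) (Complex.I * (A : ℂ) * Complex.exp (θ' * Complex.I))) •
    (Complex.exp (Complex.I * (circ A θ * (starRingEnd ℂ) z + (starRingEnd ℂ) (circ A θ') * z) / 2) •
      (matConj (φ (circ A θ')) * PiO (w (circ A θ') (circ A θ) • h (circ A θ') (circ A θ))))
  + (Complex.I * (A : ℂ) * Complex.exp (θ' * Complex.I)) •
    (Complex.exp (Complex.I * (circ A θ - circ A θ') * (starRingEnd ℂ) z / 2) •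
      (φ (circ A θ') * matConj (PiD (w (circ A θ') (circ A θ) • h (circ A θ') (circ A θ)))))

/-- The part `𝔐` of the operator `T_z`, integrating over `ℂ ∖ D`. -/
def Mpart (A : ℝ) (h : ℂ → ℂ → M2) (z : ℂ) (φ : ℂ → M2) (k : ℂ) : M2 :=
  ((Real.pi : ℂ))⁻¹ •
    ∫ ς in extD A,
      ((ς - k)⁻¹ * Complex.exp (Complex.I * ((starRingEnd ℂ) ς * z + (starRingEnd ℂ) z * ς) / 2)) •
        (matConj (φ ς) * PiO (h ς ς))

/-- The part `𝔇 = 𝔇° + 𝔇^d` of the operator `T_z`, integrating over `∂D × ∂D`. -/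
def Dpart (A : ℝ) (h : ℂ → ℂ → M2) (w : ℂ → ℂ → ℂ) (z : ℂ) (φ : ℂ → M2) (k : ℂ) : M2 :=
  (2 * (Real.pi : ℂ) * Complex.I)⁻¹ •
    ∫ θ in (0:ℝ)..(2 * Real.pi),
      (Complex.I * (A : ℂ) * Complex.exp (θ * Complex.I) * (circ A θ - k)⁻¹) •
        ∫ θ' in (0:ℝ)..(2 * Real.pi), bKer A h w z φ θ θ'

/-- The operator `T_z` of the global Riemann–Hilbert problem. -/
def TzOp (A : ℝ) (h : ℂ → ℂ → M2) (w : ℂ → ℂ → ℂ) (z : ℂ) (φ : ℂ → M2) : ℂ → M2 :=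
  fun k => Mpart A h z φ k + Dpart A h w z φ k

/-- The part `𝒞¹` of `𝒞`, integrating over `ℂ ∖ D`. -/
def C1part (A : ℝ) (h : ℂ → ℂ → M2) (z : ℂ) (φ : ℂ → M2) : M2 :=
  ((Real.pi : ℂ))⁻¹ •
    ∫ ς in extD A,
      Complex.exp (Complex.I * ((starRingEnd ℂ) ς * z + (starRingEnd ℂ) z * ς) / 2) •
        (matConj (φ ς) * PiO (h ς ς))

/-- The boundary part `𝒞° + 𝒞^d` of `𝒞`, integrating over `∂D × ∂D`. -/
def CDpartFull (A : ℝ) (h : ℂ → ℂ → M2) (w : ℂ → ℂ → ℂ) (z : ℂ) (φ : ℂ → M2) : M2 :=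
  (2 * (Real.pi : ℂ) * Complex.I)⁻¹ •
    ∫ θ in (0:ℝ)..(2 * Real.pi),
      (Complex.I * (A : ℂ) * Complex.exp (θ * Complex.I)) •
        ∫ θ' in (0:ℝ)..(2 * Real.pi), bKer A h w z φ θ θ'

/-- The functional `𝒞` (the operator `T_z` without the Cauchy kernel `1/(ς−k)`). -/
def CzOp (A : ℝ) (h : ℂ → ℂ → M2) (w : ℂ → ℂ → ℂ) (z : ℂ) (φ : ℂ → M2) : M2 :=
  C1part A h z φ + CDpartFull A h w z φ

/-- Basic condition (2602A, part 1) on the data `h`: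
`Π°h(ς,ς) ∈ L^∞(ℂ∖D) ∩ L²(ℂ∖D)` and `h ∈ L^∞(∂D×∂D)`. -/
def CondBasic (A : ℝ) (h : ℂ → ℂ → M2) : Prop :=
  MemLp (fun ς => PiO (h ς ς)) ⊤ ((volume : Measure ℂ).restrict (extD A)) ∧
  MemLp (fun ς => PiO (h ς ς)) 2 ((volume : Measure ℂ).restrict (extD A)) ∧
  ∃ M : ℝ, ∀ ς' ∈ sphere (0 : ℂ) A, ∀ ς ∈ sphere (0 : ℂ) A, ‖h ς' ς‖ ≤ M

/-- Strong condition (strh) on the data `h`: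
`|ς|³ Π°h(ς,ς) ∈ L^∞(ℂ∖D) ∩ L¹(ℂ∖D)` and `h ∈ L^∞(∂D×∂D)`. -/
def CondStrong (A : ℝ) (h : ℂ → ℂ → M2) : Prop :=
  MemLp (fun ς => (‖ς‖ ^ 3 : ℝ) • PiO (h ς ς)) ⊤
    ((volume : Measure ℂ).restrict (extD A)) ∧
  MemLp (fun ς => (‖ς‖ ^ 3 : ℝ) • PiO (h ς ς)) 1
    ((volume : Measure ℂ).restrict (extD A)) ∧
  ∃ M : ℝ, ∀ ς' ∈ sphere (0 : ℂ) A, ∀ ς ∈ sphere (0 : ℂ) A, ‖h ς' ς‖ ≤ M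

/-- Logarithmic bound (2602A, part 2) on the weight `w`:
`|w(ς',ς)| ≤ C |log |ς−ς'||` on `∂D × ∂D`. -/
def CondLog (A C : ℝ) (w : ℂ → ℂ → ℂ) : Prop :=
  ∀ ς' ∈ sphere (0 : ℂ) A, ∀ ς ∈ sphere (0 : ℂ) A,
    ‖w ς' ς‖ ≤ C * |Real.log ‖ς - ς'‖|

/-- The norm `‖h‖_H`. -/
def normH (A : ℝ) (h : ℂ → ℂ → M2) : ℝ :=
  (eLpNorm (fun ς => PiO (h ς ς)) ⊤ ((volume : Measure ℂ).restrict (extD A))).toReal +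
  (eLpNorm (fun ς => PiO (h ς ς)) 2 ((volume : Measure ℂ).restrict (extD A))).toReal +
  ⨆ p : sphere (0 : ℂ) A × sphere (0 : ℂ) A, ‖h (p.1 : ℂ) (p.2 : ℂ)‖

/-- The symmetry condition `h₁₁ = h₂₂`, `h₁₂ = ± h₂₁` (sign `ε`), on the diagonal in
`ℂ ∖ D` and on `∂D × ∂D`. -/
def SymCond (A : ℝ) (ε : ℂ) (h : ℂ → ℂ → M2) : Prop :=
  (∀ k ∈ extD A, h k k 0 0 = h k k 1 1 ∧ h k k 0 1 = ε * h k k 1 0) ∧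
  (∀ ς' ∈ sphere (0 : ℂ) A, ∀ ς ∈ sphere (0 : ℂ) A,
    h ς' ς 0 0 = h ς' ς 1 1 ∧ h ς' ς 0 1 = ε * h ς' ς 1 0)

/-- The time evolution `h(ς',ς,t)` of time-independent scattering data `h`. -/
def hT (h : ℂ → ℂ → M2) (t : ℝ) (ς' ς : ℂ) : M2 :=
  Complex.exp (-(t : ℂ) * (ς ^ 2 - ((starRingEnd ℂ) ς') ^ 2) / 2) • PiO (h ς' ς)
  + Complex.exp (-(t : ℂ) * (((starRingEnd ℂ) ς) ^ 2 - ((starRingEnd ℂ) ς') ^ 2) / 2) •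
      PiD (h ς' ς)

/-- The logarithmic weight `Ln((ς̄' − ς̄)/(ς̄' − k̄₀))`. -/
def wLn (k0 : ℂ) (ς' ς : ℂ) : ℂ :=
  Complex.log (((starRingEnd ℂ) ς' - (starRingEnd ℂ) ς) / ((starRingEnd ℂ) ς' - (starRingEnd ℂ) k0))

/-- The Wirtinger derivative `∂̄ = ½(∂_x + i ∂_y)`. -/
def wbar {E : Type} [NormedAddCommGroup E] [NormedSpace ℝ E] [Module ℂ E] (f : ℂ → E) (z : ℂ) : E :=
  (2 : ℂ)⁻¹ • (fderiv ℝ f z 1 + Complex.I • fderiv ℝ f z Complex.I)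

/-- The Wirtinger derivative `∂ = ½(∂_x − i ∂_y)`. -/
def wd {E : Type} [NormedAddCommGroup E] [NormedSpace ℝ E] [Module ℂ E] (f : ℂ → E) (z : ℂ) : E :=
  (2 : ℂ)⁻¹ • (fderiv ℝ f z 1 - Complex.I • fderiv ℝ f z Complex.I)

/-- The off-diagonal matrix potential `Q⁰` built from `q₀` with sign `ε`. -/
def Q0 (ε : ℂ) (q0 : ℂ → ℂ) : ℂ → M2 :=
  fun z => Matrix.of fun i j =>
    if i = j then 0 else if (i : ℕ) = 0 then q0 z else ε * q0 z

/-- `k` is an exceptional point of the potential `Q`: the homogeneous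
Lippmann–Schwinger equation has a nontrivial solution in some `L^q`, `q > 2`. -/
def Exceptional (Q : ℂ → M2) (k : ℂ) : Prop :=
  ∃ μ : ℂ → M2, μ ≠ 0 ∧ (∃ q : ℝ, 2 < q ∧ MemLp μ (ENNReal.ofReal q) (volume : Measure ℂ)) ∧
    ∀ z : ℂ, μ z = ∫ z' : ℂ,
      (((Real.pi : ℂ) * (z - z'))⁻¹ *
        Complex.exp (-(((Complex.I * (starRingEnd ℂ) k * z').re : ℝ) : ℂ))) •
        (Q z' * matConj (μ z'))

/-- `ψ` is the family of scattering solutions of the Lippmann–Schwinger equation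
for the potential `Q` (for non-exceptional `k`). -/
def IsScatteringSol (Q : ℂ → M2) (ψ : ℂ → ℂ → M2) : Prop :=
  (∀ k : ℂ, ¬ Exceptional Q k → ∀ z : ℂ,
    ψ z k = Complex.exp (Complex.I * (starRingEnd ℂ) k * z / 2) • (1 : M2) +
      ∫ z' : ℂ, (((Real.pi : ℂ) * (z - z'))⁻¹ *
          Complex.exp (Complex.I * (starRingEnd ℂ) k * (z - z') / 2)) •
        (Q z' * matConj (ψ z' k))) ∧
  ∀ k : ℂ, ¬ Exceptional Q k → ∃ q : ℝ, 2 < q ∧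
    MemLp (fun z => Complex.exp (-(Complex.I * (starRingEnd ℂ) k * z) / 2) • ψ z k - (1 : M2))
      (ENNReal.ofReal q) (volume : Measure ℂ)

/-- The generalized scattering data `h₀(ς,k)` built from the potential `Q`
and its scattering solutions `ψ`. -/
def scatData (Q : ℂ → M2) (ψ : ℂ → ℂ → M2) (ς k : ℂ) : M2 :=
  (((2 * Real.pi) ^ 2 : ℂ))⁻¹ •
    ∫ z : ℂ, Complex.exp (-(Complex.I * (starRingEnd ℂ) ς * z) / 2) • (Q z * matConj (ψ z k))

/-- The off-diagonal (`Π°`) term of the boundary integrand. -/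
def bKerO (A : ℝ) (h : ℂ → ℂ → M2) (w : ℂ → ℂ → ℂ) (z : ℂ) (φ : ℂ → M2) (θ θ' : ℝ) : M2 :=
  ((starRingEnd ℂ) (Complex.I * (A : ℂ) * Complex.exp (θ' * Complex.I))) •
    (Complex.exp (Complex.I * (circ A θ * (starRingEnd ℂ) z + (starRingEnd ℂ) (circ A θ') * z) / 2) •
      (matConj (φ (circ A θ')) * PiO (w (circ A θ') (circ A θ) • h (circ A θ') (circ A θ))))

/-- The diagonal (`Π^d 𝐂`) term of the boundary integrand. -/
def bKerD (A : ℝ) (h : ℂ → ℂ → M2) (w : ℂ → ℂ → ℂ) (z : ℂ) (φ : ℂ → M2) (θ θ' : ℝ) : M2 :=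
  (Complex.I * (A : ℂ) * Complex.exp (θ' * Complex.I)) •
    (Complex.exp (Complex.I * (circ A θ - circ A θ') * (starRingEnd ℂ) z / 2) •
      (φ (circ A θ') * matConj (PiD (w (circ A θ') (circ A θ) • h (circ A θ') (circ A θ)))))

/-- The part `𝔇°` of `T_z` (boundary part containing `Π°`). -/
def DOpart (A : ℝ) (h : ℂ → ℂ → M2) (w : ℂ → ℂ → ℂ) (z : ℂ) (φ : ℂ → M2) (k : ℂ) : M2 :=
  (2 * (Real.pi : ℂ) * Complex.I)⁻¹ •
    ∫ θ in (0:ℝ)..(2 * Real.pi),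
      (Complex.I * (A : ℂ) * Complex.exp (θ * Complex.I) * (circ A θ - k)⁻¹) •
        ∫ θ' in (0:ℝ)..(2 * Real.pi), bKerO A h w z φ θ θ'

/-- The part `𝔇^d` of `T_z` (boundary part containing `Π^d 𝐂`). -/
def DDpart (A : ℝ) (h : ℂ → ℂ → M2) (w : ℂ → ℂ → ℂ) (z : ℂ) (φ : ℂ → M2) (k : ℂ) : M2 :=
  (2 * (Real.pi : ℂ) * Complex.I)⁻¹ •
    ∫ θ in (0:ℝ)..(2 * Real.pi),
      (Complex.I * (A : ℂ) * Complex.exp (θ * Complex.I) * (circ A θ - k)⁻¹) •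
        ∫ θ' in (0:ℝ)..(2 * Real.pi), bKerD A h w z φ θ θ'

/-- The part `𝒞°` of `𝒞` (boundary part containing `Π°`). -/
def COpart (A : ℝ) (h : ℂ → ℂ → M2) (w : ℂ → ℂ → ℂ) (z : ℂ) (φ : ℂ → M2) : M2 :=
  (2 * (Real.pi : ℂ) * Complex.I)⁻¹ •
    ∫ θ in (0:ℝ)..(2 * Real.pi),
      (Complex.I * (A : ℂ) * Complex.exp (θ * Complex.I)) •
        ∫ θ' in (0:ℝ)..(2 * Real.pi), bKerO A h w z φ θ θ'

/-- The part `𝒞^d` of `𝒞` (boundary part containing `Π^d 𝐂`). -/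
def CDpart (A : ℝ) (h : ℂ → ℂ → M2) (w : ℂ → ℂ → ℂ) (z : ℂ) (φ : ℂ → M2) : M2 :=
  (2 * (Real.pi : ℂ) * Complex.I)⁻¹ •
    ∫ θ in (0:ℝ)..(2 * Real.pi),
      (Complex.I * (A : ℂ) * Complex.exp (θ * Complex.I)) •
        ∫ θ' in (0:ℝ)..(2 * Real.pi), bKerD A h w z φ θ θ'

/-- The kernel of `I + T_z` in `ℋ^s` is trivial. -/
def KernelTrivial (s A : ℝ) (h : ℂ → ℂ → M2) (w : ℂ → ℂ → ℂ) (z : ℂ) : Prop :=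
  ∀ φ : ℂ → M2, memHs s A φ → (∀ k, φ k + TzOp A h w z φ k = 0) → ∀ k, φ k = 0

/-- `v` solves `(I + T_z) v = I` with `v − I ∈ ℋ^s`. -/
def SolvesRH (s A : ℝ) (h : ℂ → ℂ → M2) (w : ℂ → ℂ → ℂ) (z : ℂ) (v : ℂ → M2) : Prop :=
  memHs s A (fun k => v k - 1) ∧ ∀ k, v k + TzOp A h w z v k = 1

/-- The function `ψ := Π^d v̄ e^{i k̄ z/2} + e^{−i z̄ k/2} Π° v`. -/
def psiFun (v : ℂ → ℂ → M2) (z k : ℂ) : M2 :=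
  Complex.exp (Complex.I * (starRingEnd ℂ) k * z / 2) • PiD (matConj (v z k)) +
  Complex.exp (-(Complex.I * (starRingEnd ℂ) z * k) / 2) • PiO (v z k)

/-- The function `q(z,t) = (1/(2i)) (Π° 𝒞_{z,t} v)₁₂` for a time-dependent family of data. -/
def qFunT (A : ℝ) (k0 : ℂ) (hfam : ℝ → ℂ → ℂ → M2) (v : ℂ → ℝ → ℂ → M2) (z : ℂ) (t : ℝ) : ℂ :=
  (2 * Complex.I)⁻¹ * (PiO (CzOp A (hfam t) (wLn k0) z (v z t))) 0 1

/-- The function `φ(z,t)`, the diagonal entry of `(1/(2i)) ∂̄ Π^d 𝒞_{z,t} v`. -/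
def phiFunT (A : ℝ) (k0 : ℂ) (hfam : ℝ → ℂ → ℂ → M2) (v : ℂ → ℝ → ℂ → M2) (z : ℂ) (t : ℝ) : ℂ :=
  (2 * Complex.I)⁻¹ * (wbar (fun ζ => PiD (CzOp A (hfam t) (wLn k0) ζ (v ζ t))) z) 0 0

/-- The matrix `A(z,t)` with `A₁₂ = ±A₂₁ = −4 ∂̄q` and `A₁₁ = A₂₂ = ∓4φ` (sign `ε`). -/
def AmatT (ε : ℂ) (A : ℝ) (k0 : ℂ) (hfam : ℝ → ℂ → ℂ → M2) (v : ℂ → ℝ → ℂ → M2)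
    (z : ℂ) (t : ℝ) : M2 :=
  Matrix.of fun i j =>
    if i = j then -ε * 4 * phiFunT A k0 hfam v z t
    else if (i : ℕ) = 0 then -4 * wbar (fun ζ => qFunT A k0 hfam v ζ t) z
    else ε * (-4 * wbar (fun ζ => qFunT A k0 hfam v ζ t) z)

/-- The compatibility condition
`v_t + 2(v_z̄z̄ + v_zz) − 2ik v_z̄ + A (Π^d v) + Ā (Π° v) = 0`. -/
def CompatCond (ε : ℂ) (A : ℝ) (k0 : ℂ) (hfam : ℝ → ℂ → ℂ → M2) (v : ℂ → ℝ → ℂ → M2)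
    (z : ℂ) (t : ℝ) : Prop :=
  ∀ k : ℂ,
    deriv (fun τ => v z τ k) t
    + (2 : ℂ) • (wbar (fun ζ => wbar (fun ξ => v ξ t k) ζ) z
        + wd (fun ζ => wd (fun ξ => v ξ t k) ζ) z)
    - (2 * Complex.I * k) • wbar (fun ζ => v ζ t k) z
    + AmatT ε A k0 hfam v z t * PiD (v z t k)
    + matConj (AmatT ε A k0 hfam v z t) * PiO (v z t k) = 0

/-- Iterated spatial derivatives (in `Re z`, `Im z`) of an operator family,
obtained by differentiating pointwise (i.e. under the integral sign);
`true` codes a `∂_x` derivative and `false` a `∂_y` derivative. -/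
def famD : List Bool → (ℂ → ℝ → (ℂ → M2) → ℂ → M2) → ℂ → ℝ → (ℂ → M2) → ℂ → M2
  | [], F => F
  | b :: l, F => fun z t φ k =>
      fderiv ℝ (fun ζ => famD l F ζ t φ k) z (if b then 1 else Complex.I)

/-- The (one-sided at `t = 0`) time derivative of an operator family, obtained by
differentiating pointwise (i.e. under the integral sign). -/
def timeD (F : ℂ → ℝ → (ℂ → M2) → ℂ → M2) : ℂ → ℝ → (ℂ → M2) → ℂ → M2 :=
  fun z t φ k => derivWithin (fun τ => F z τ φ k) (Ici (0:ℝ)) t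

/-- The class `W^{n,∞}_comp`: functions with `n` bounded derivatives supported in `O`. -/
def Wcomp (n : ℕ) (O : Set ℂ) : Set (ℂ → ℂ) :=
  {f | ContDiff ℝ n f ∧ tsupport f ⊆ O}

/-- The `W^{n,∞}` distance. -/
def WcompDist (n : ℕ) (f g : ℂ → ℂ) : ℝ :=
  ∑ j ∈ Finset.range (n + 1), ⨆ z : ℂ, ‖iteratedFDeriv ℝ j (fun u => f u - g u) z‖


@[reducible] def instCENormM2 : ContinuousENorm M2 := SeminormedAddGroup.toContinuousENorm

@[reducible] def instENormedM2 : ENormedAddCommMonoid M2 := NormedAddCommGroup.toENormedAddCommMonoid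

@[reducible] def instPMetM2 : TopologicalSpace.PseudoMetrizableSpace M2 :=
  inferInstanceAs (TopologicalSpace.PseudoMetrizableSpace (Fin 2 → Fin 2 → ℂ))

def Jm (ε : ℂ) : M2 := !![0, 1; ε, 0]
def Jm' (ε : ℂ) : M2 := !![0, ε; 1, 0]

lemma Jm_mul_Jm' {ε : ℂ} (h : ε * ε = 1) : Jm ε * Jm' ε = 1 := by
  ext i j; fin_cases i <;> fin_cases j <;>
    simp [Jm, Jm', Matrix.mul_apply, Fin.sum_univ_two, h, Matrix.one_apply]

lemma Jm_mul_Jm {ε : ℂ} : Jm ε * Jm ε = ε • 1 := by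
  ext i j; fin_cases i <;> fin_cases j <;>
    simp [Jm, Matrix.mul_apply, Fin.sum_univ_two, Matrix.one_apply, mul_comm]

lemma Jm'_mul_Jm' {ε : ℂ} : Jm' ε * Jm' ε = ε • 1 := by
  ext i j; fin_cases i <;> fin_cases j <;>
    simp [Jm', Matrix.mul_apply, Fin.sum_univ_two, Matrix.one_apply, mul_comm]

def Slin (ε : ℂ) : M2 →ₗ[ℂ] M2 where
  toFun M := Jm ε * M * Jm' ε
  map_add' M N := by simp [mul_add, add_mul]
  map_smul' c M := by simp [Matrix.smul_mul, Matrix.mul_smul]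

lemma Slin_invol {ε : ℂ} (h : ε * ε = 1) : Function.Involutive (Slin ε) := by
  intro M
  show Jm ε * (Jm ε * M * Jm' ε) * Jm' ε = M
  have e : Jm ε * (Jm ε * M * Jm' ε) * Jm' ε = (Jm ε * Jm ε) * M * (Jm' ε * Jm' ε) := by
    noncomm_ring
  rw [e, Jm_mul_Jm, Jm'_mul_Jm']
  simp [Matrix.smul_mul, Matrix.mul_smul, smul_smul, h]

def Sequiv (ε : ℂ) (h : ε * ε = 1) : M2 ≃L[ℂ] M2 :=
  (LinearEquiv.ofInvolutive (Slin ε) (Slin_invol h)).toContinuousLinearEquiv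

lemma Sequiv_apply (ε : ℂ) (h : ε * ε = 1) (M : M2) :
    Sequiv ε h M = Jm ε * M * Jm' ε := rfl

lemma matConj_mul (A B : M2) : matConj (A * B) = matConj A * matConj B := by
  ext i j; simp [matConj, Matrix.mul_apply, map_sum]

lemma matConj_one : matConj 1 = 1 := by
  ext i j; by_cases h : i = j <;> simp [matConj, Matrix.one_apply, h]

lemma matConj_smul (c : ℂ) (M : M2) : matConj (c • M) = (starRingEnd ℂ) c • matConj M := by
  ext i j; simp [matConj]

lemma matConj_sub (A B : M2) : matConj (A - B) = matConj A - matConj B := by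
  ext i j; simp [matConj]

lemma matConj_Jm {ε : ℂ} (hr : (starRingEnd ℂ) ε = ε) : matConj (Jm ε) = Jm ε := by
  ext i j; fin_cases i <;> fin_cases j <;> simp [matConj, Jm, hr]

lemma matConj_Jm' {ε : ℂ} (hr : (starRingEnd ℂ) ε = ε) : matConj (Jm' ε) = Jm' ε := by
  ext i j; fin_cases i <;> fin_cases j <;> simp [matConj, Jm', hr]

lemma norm_Jm_mul_matConj_le {ε : ℂ} (habs : ‖ε‖ = 1) (M : M2) :
    ‖Jm ε * matConj M‖ ≤ ‖M‖ := by
  rw [Matrix.norm_le_iff (norm_nonneg M)]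
  intro i j
  fin_cases i
  · calc ‖(Jm ε * matConj M) 0 j‖ = ‖M 1 j‖ := by
          simp [Jm, matConj, Matrix.mul_apply, Fin.sum_univ_two]
      _ ≤ ‖M‖ := Matrix.norm_entry_le_entrywise_sup_norm M
  · calc ‖(Jm ε * matConj M) 1 j‖ = ‖M 0 j‖ := by
          simp [Jm, matConj, Matrix.mul_apply, Fin.sum_univ_two, map_mul,
            habs]
      _ ≤ ‖M‖ := Matrix.norm_entry_le_entrywise_sup_norm M

lemma norm_matrix_entry (M : M2) (i j : Fin 2) : ‖M i j‖ ≤ ‖M‖ :=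
  Matrix.norm_entry_le_entrywise_sup_norm M

lemma lint_riesz {a : ℝ} (h0 : 0 ≤ a) (h2 : a < 2) (z : ℂ) {R : ℝ} (hR : 0 < R) :
    ∫⁻ x in closedBall z R, ENNReal.ofReal (‖x - z‖ ^ (-a)) ∂(volume : Measure ℂ) < ⊤ := by
  set A : ℕ → Set ℂ := fun n => closedBall z (R / 2 ^ n) \ ball z (R / 2 ^ (n + 1)) with hA
  -- cover
  have hsub : closedBall z R ⊆ {z} ∪ ⋃ n, A n := by
    intro x hx
    by_cases hxz : x = z
    · exact Or.inl (by simp [hxz])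
    · right
      have hd : 0 < dist x z := dist_pos.2 hxz
      have hex : ∃ n : ℕ, R / 2 ^ (n + 1) ≤ dist x z := by
        obtain ⟨n, hn⟩ := pow_unbounded_of_one_lt (R / dist x z) (one_lt_two (α := ℝ))
        refine ⟨n, ?_⟩
        have : R / 2 ^ (n + 1) ≤ R / 2 ^ n := by
          apply div_le_div_of_nonneg_left hR.le (by positivity)
          exact pow_le_pow_right₀ one_le_two (Nat.le_succ n)
        refine this.trans ?_
        rw [div_le_iff₀ (by positivity)]
        calc R = (R / dist x z) * dist x z := by field_simp
          _ ≤ 2 ^ n * dist x z := by nlinarith [hn.le, hd]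
          _ = dist x z * 2 ^ n := by ring
      have h1 : R / 2 ^ (Nat.find hex + 1) ≤ dist x z := Nat.find_spec hex
      have h2' : dist x z ≤ R / 2 ^ Nat.find hex := by
        rcases Nat.eq_zero_or_pos (Nat.find hex) with h | h
        · rw [h]; simpa using (mem_closedBall.1 hx)
        · obtain ⟨m, hm⟩ := Nat.exists_eq_succ_of_ne_zero h.ne'
          have hmin := Nat.find_min hex (m := m) (by omega)
          push_neg at hmin
          rw [hm]; exact hmin.le
      exact mem_iUnion.2 ⟨Nat.find hex,
        ⟨mem_closedBall.2 h2', by simpa [mem_ball] using not_lt.2 h1⟩⟩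
  -- geometric bound on each annulus
  set v : ℕ → ℝ := fun n => (R / 2 ^ (n + 1)) ^ (-a) * (R / 2 ^ n) ^ 2 with hv
  have hvpos : ∀ n, 0 < R / 2 ^ n := fun n => by positivity
  have hvnn : ∀ n, 0 ≤ v n := fun n => by
    have := (hvpos (n+1)); positivity
  have hterm : ∀ n, (∫⁻ x in A n, ENNReal.ofReal (‖x - z‖ ^ (-a)) ∂volume)
      ≤ ENNReal.ofReal (v n) * NNReal.pi := by
    intro n
    have hb : ∀ x ∈ A n, ENNReal.ofReal (‖x - z‖ ^ (-a))
        ≤ ENNReal.ofReal ((R / 2 ^ (n + 1)) ^ (-a)) := by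
      intro x hx
      apply ENNReal.ofReal_le_ofReal
      apply Real.rpow_le_rpow_of_nonpos (hvpos (n+1)) _ (neg_nonpos.2 h0)
      have := hx.2
      simp only [mem_ball, not_lt] at this
      simpa [dist_eq_norm] using this
    calc ∫⁻ x in A n, ENNReal.ofReal (‖x - z‖ ^ (-a)) ∂volume
        ≤ ∫⁻ _ in A n, ENNReal.ofReal ((R / 2 ^ (n + 1)) ^ (-a)) ∂volume :=
          setLIntegral_mono measurable_const hb
      _ = ENNReal.ofReal ((R / 2 ^ (n + 1)) ^ (-a)) * volume (A n) := setLIntegral_const _ _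
      _ ≤ ENNReal.ofReal ((R / 2 ^ (n + 1)) ^ (-a)) * volume (closedBall z (R / 2 ^ n)) := by
          gcongr; exact diff_subset
      _ = ENNReal.ofReal ((R / 2 ^ (n + 1)) ^ (-a)) *
            (ENNReal.ofReal (R / 2 ^ n) ^ 2 * NNReal.pi) := by rw [Complex.volume_closedBall]
      _ = ENNReal.ofReal (v n) * NNReal.pi := by
          have hXnn : (0:ℝ) ≤ (R / 2 ^ (n + 1)) ^ (-a) := Real.rpow_nonneg (hvpos (n+1)).le _
          rw [hv]
          simp only []
          rw [ENNReal.ofReal_mul hXnn, ENNReal.ofReal_pow (hvpos n).le]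
          ring
  -- summability of v
  have hvrec : ∀ n, v n = ((2:ℝ) ^ a / 4) ^ n * v 0 := by
    intro n
    induction n with
    | zero => simp
    | succ m ih =>
      have e1 : (R / 2 ^ (m + 2)) ^ (-a) = (R / 2 ^ (m + 1)) ^ (-a) * 2 ^ a := by
        have : R / 2 ^ (m + 2) = (R / 2 ^ (m + 1)) / 2 := by ring
        rw [this, Real.div_rpow (hvpos (m+1)).le (by norm_num),
          Real.rpow_neg (by norm_num : (0:ℝ) ≤ 2)]
        field_simp
      have e2 : (R / 2 ^ (m + 1)) ^ 2 = (R / 2 ^ m) ^ 2 / 4 := by ring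
      calc v (m + 1) = (R / 2 ^ (m + 2)) ^ (-a) * (R / 2 ^ (m+1)) ^ 2 := rfl
        _ = ((2:ℝ) ^ a / 4) * v m := by rw [e1, e2, hv]; ring
        _ = ((2:ℝ) ^ a / 4) ^ (m + 1) * v 0 := by rw [ih]; ring
  have hratio : (2:ℝ) ^ a / 4 < 1 := by
    rw [div_lt_one (by norm_num)]
    calc (2:ℝ) ^ a < 2 ^ (2:ℝ) := Real.rpow_lt_rpow_of_exponent_lt one_lt_two h2
      _ = 4 := by
        rw [show (2:ℝ) = ((2:ℕ):ℝ) by norm_num, Real.rpow_natCast]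
        norm_num
  have hsumv : Summable v := by
    have : Summable (fun n => ((2:ℝ) ^ a / 4) ^ n * v 0) :=
      (summable_geometric_of_lt_one (by positivity) hratio).mul_right _
    exact this.congr fun n => (hvrec n).symm
  -- put together
  calc ∫⁻ x in closedBall z R, ENNReal.ofReal (‖x - z‖ ^ (-a)) ∂volume
      ≤ ∫⁻ x in {z} ∪ ⋃ n, A n, ENNReal.ofReal (‖x - z‖ ^ (-a)) ∂volume :=
        lintegral_mono_set hsub
    _ ≤ (∫⁻ x in {z}, ENNReal.ofReal (‖x - z‖ ^ (-a)) ∂volume)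
        + ∫⁻ x in ⋃ n, A n, ENNReal.ofReal (‖x - z‖ ^ (-a)) ∂volume :=
        lintegral_union_le _ _ _
    _ ≤ 0 + ∑' n, ∫⁻ x in A n, ENNReal.ofReal (‖x - z‖ ^ (-a)) ∂volume := by
        gcongr
        · have : (volume : Measure ℂ).restrict {z} = 0 := by
            rw [Measure.restrict_eq_zero]; exact measure_singleton z
          rw [this, lintegral_zero_measure]
        · exact lintegral_iUnion_le _ _
    _ ≤ 0 + ∑' n, ENNReal.ofReal (v n) * NNReal.pi := by gcongr; exact hterm _
    _ = (∑' n, ENNReal.ofReal (v n)) * NNReal.pi := by rw [zero_add, ENNReal.tsum_mul_right]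
    _ < ⊤ := by
        rw [← ENNReal.ofReal_tsum_of_nonneg hvnn hsumv]
        exact ENNReal.mul_lt_top ENNReal.ofReal_lt_top ENNReal.coe_lt_top

lemma memLp_riesz (z : ℂ) {r : ℝ} (hr1 : 0 < r) (hr2 : r < 2) {Kc : Set ℂ} {R : ℝ}
    (hR : 0 < R) (hKc : Kc ⊆ closedBall z R) :
    MemLp (fun x : ℂ => ‖x - z‖⁻¹) (ENNReal.ofReal r) ((volume : Measure ℂ).restrict Kc) := by
  have hmeas : Measurable fun x : ℂ => ‖x - z‖⁻¹ :=
    ((measurable_id.sub measurable_const).norm).inv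
  refine ⟨hmeas.aestronglyMeasurable, ?_⟩
  rw [eLpNorm_lt_top_iff_lintegral_rpow_enorm_lt_top (ENNReal.ofReal_pos.2 hr1).ne'
      ENNReal.ofReal_ne_top]
  have hkey : ∀ x : ℂ, ‖‖x - z‖⁻¹‖ₑ ^ (ENNReal.ofReal r).toReal
      = ENNReal.ofReal (‖x - z‖ ^ (-r)) := by
    intro x
    rw [ENNReal.toReal_ofReal hr1.le,
      Real.enorm_eq_ofReal (by positivity),
      ENNReal.ofReal_rpow_of_nonneg (by positivity) hr1.le,
      Real.inv_rpow (norm_nonneg _), ← Real.rpow_neg (norm_nonneg _)]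
  calc ∫⁻ x, ‖‖x - z‖⁻¹‖ₑ ^ (ENNReal.ofReal r).toReal
        ∂((volume : Measure ℂ).restrict Kc)
      = ∫⁻ x in Kc, ENNReal.ofReal (‖x - z‖ ^ (-r)) ∂(volume : Measure ℂ) := by
        simp_rw [hkey]
    _ ≤ ∫⁻ x in closedBall z R, ENNReal.ofReal (‖x - z‖ ^ (-r)) ∂(volume : Measure ℂ) :=
        lintegral_mono_set hKc
    _ < ⊤ := lint_riesz hr1.le hr2 z hR

-- continuous linear maps for measurability
def matConjL : M2 →L[ℝ] M2 :=
  LinearMap.toContinuousLinearMap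
    { toFun := matConj
      map_add' := fun A B => by ext i j; simp [matConj]
      map_smul' := fun r M => by
        ext i j
        simp [matConj, Complex.real_smul, map_mul] }

def mulJL (ε : ℂ) : M2 →L[ℂ] M2 :=
  LinearMap.toContinuousLinearMap (LinearMap.mulLeft ℂ (Jm ε))

lemma S_entry00 (ε : ℂ) (M : M2) : (Jm ε * M * Jm' ε) 0 0 = M 1 1 := by
  simp [Jm, Jm', Matrix.mul_apply, Fin.sum_univ_two, Matrix.vecMul, dotProduct]

lemma S_entry01 (ε : ℂ) (M : M2) : (Jm ε * M * Jm' ε) 0 1 = ε * M 1 0 := by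
  simp [Jm, Jm', Matrix.mul_apply, Fin.sum_univ_two, Matrix.vecMul, dotProduct, mul_comm]


set_option maxHeartbeats 1000000 in
/-- proof of Lemma `0312A`: for an off-diagonal potential `Q` with
`Q₁₂ = ±Q₂₁ ∈ L^p_comp(ℝ²)`, `p > 2`, and a non-exceptional `k`, the unique solution
`μ` of `μ = I + (1/π)∫ (e^{−Re(i k̄ z')}/(z−z')) Q μ̄` with `μ − I ∈ L^q`,
`q > 2p/(p−2)`, satisfies `μ₁₁ = μ₂₂` and `μ₁₂ = ±μ₂₁`. -/
theorem statement9 (ε : ℂ) (hε : ε = 1 ∨ ε = -1) (p : ℝ) (hp : 2 < p)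
    (Q : ℂ → M2) (hQd : ∀ z : ℂ, Q z 0 0 = 0 ∧ Q z 1 1 = 0)
    (hQs : ∀ z : ℂ, Q z 0 1 = ε * Q z 1 0)
    (hQp : MemLp (fun z => Q z 0 1) (ENNReal.ofReal p) (volume : Measure ℂ))
    (hQc : HasCompactSupport Q)
    (k : ℂ) (hk : ¬ Exceptional Q k)
    (q : ℝ) (hq : 2 * p / (p - 2) < q)
    (μ : ℂ → M2)
    (hμmem : MemLp (fun z => μ z - 1) (ENNReal.ofReal q) (volume : Measure ℂ))
    (hμ : ∀ z : ℂ, μ z = 1 + ∫ z' : ℂ,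
      (((Real.pi : ℂ) * (z - z'))⁻¹ *
        Complex.exp (-(((Complex.I * (starRingEnd ℂ) k * z').re : ℝ) : ℂ))) •
        (Q z' * matConj (μ z'))) :
    ∀ z : ℂ, μ z 0 0 = μ z 1 1 ∧ μ z 0 1 = ε * μ z 1 0 := by
  letI := instCENormM2
  letI := instENormedM2
  letI := instPMetM2
  -- sign facts
  have hε2 : ε * ε = 1 := by rcases hε with h | h <;> simp [h]
  have hεr : (starRingEnd ℂ) ε = ε := by rcases hε with h | h <;> simp [h]
  have hεabs : ‖ε‖ = 1 := by rcases hε with h | h <;> simp [h]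
  -- basic positivity
  have hp2 : (0:ℝ) < p - 2 := by linarith
  have hp0 : (0:ℝ) < p := by linarith
  have hq2 : (2:ℝ) < q := by
    have h1 : (2:ℝ) < 2 * p / (p - 2) := by
      rw [lt_div_iff₀ hp2]; nlinarith
    linarith
  have hq0 : (0:ℝ) < q := by linarith
  -- the kernel
  set Kker : ℂ → ℂ → ℂ := fun z z' => ((Real.pi : ℂ) * (z - z'))⁻¹ *
      Complex.exp (-(((Complex.I * (starRingEnd ℂ) k * z').re : ℝ) : ℂ)) with hKker
  -- factor Q through a scalar function
  set qf : ℂ → ℂ := fun z => Q z 0 1 with hqf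
  have hQfact : ∀ z, Q z = qf z • Jm ε := by
    intro z
    have h10 : Q z 1 0 = ε * Q z 0 1 := by
      rw [hQs z, ← mul_assoc, hε2, one_mul]
    ext i j
    fin_cases i <;> fin_cases j <;>
      simp [Jm, hqf, (hQd z).1, (hQd z).2, h10, mul_comm]
  -- the symmetry operator
  set S := Sequiv ε hε2 with hS
  have hS1 : S (1 : M2) = 1 := by
    rw [hS, Sequiv_apply, mul_one, Jm_mul_Jm' hε2]
  set ν : ℂ → M2 := fun z => S (μ z) with hν
  have hmatConjS : ∀ M : M2, matConj (S M) = Jm ε * matConj M * Jm' ε := by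
    intro M
    rw [hS, Sequiv_apply, matConj_mul, matConj_mul, matConj_Jm hεr, matConj_Jm' hεr]
  have hScomm : ∀ z z' : ℂ, ∀ M : M2,
      S (Kker z z' • (Q z' * matConj M)) = Kker z z' • (Q z' * matConj (S M)) := by
    intro z z' M
    rw [hS, Sequiv_apply, hmatConjS, hQfact z']
    simp only [Matrix.smul_mul, Matrix.mul_smul, smul_smul]
    rw [mul_comm (Kker z z') (qf z')]
    congr 1
    noncomm_ring
  -- equation for ν
  have hνeq : ∀ z : ℂ, ν z = 1 + ∫ z' : ℂ, Kker z z' • (Q z' * matConj (ν z')) := by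
    intro z
    have h0 := congrArg S (hμ z)
    rw [map_add, hS1] at h0
    have hc : ∀ g : ℂ → M2, S (∫ z', g z') = ∫ z', S (g z') :=
      fun g => (ContinuousLinearEquiv.integral_comp_comm S g).symm
    rw [hc] at h0
    rw [hν]
    simp only []
    rw [h0]
    congr 1
    exact integral_congr_ae (Eventually.of_forall fun z' => hScomm z z' (μ z'))
  -- support of Q
  obtain ⟨R0, hR0pos, hR0⟩ :
      ∃ R0 : ℝ, 0 < R0 ∧ tsupport Q ⊆ closedBall (0 : ℂ) R0 :=
    hQc.isBounded.subset_closedBall_lt 0 0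
  set Kc : Set ℂ := tsupport Q with hKc
  have hKcm : MeasurableSet Kc := (isClosed_tsupport Q).measurableSet
  haveI hfin : IsFiniteMeasure ((volume : Measure ℂ).restrict Kc) :=
    ⟨by rw [Measure.restrict_apply_univ]; exact hQc.measure_lt_top⟩
  -- exponents
  have h1q : 1 / q < (p - 2) / (2 * p) := by
    have h2pq : (0:ℝ) < 2 * p / (p - 2) := by positivity
    have := one_div_lt_one_div_of_lt h2pq hq
    rwa [one_div_div] at this
  have hpq_half : 1 / p + 1 / q < 1 / 2 := by
    have : 1 / p + (p - 2) / (2 * p) = 1 / 2 := by field_simp; ring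
    linarith
  set s : ℝ := 1 - (1 / p + 1 / q) with hs
  have hs_half : (1:ℝ)/2 < s := by rw [hs]; linarith
  have hs_pos : (0:ℝ) < s := lt_trans (by norm_num) hs_half
  have hs_lt1 : s < 1 := by
    have : (0:ℝ) < 1 / p + 1 / q := by positivity
    rw [hs]; linarith
  set rr : ℝ := s⁻¹ with hrr
  have hrr0 : (0:ℝ) < rr := by rw [hrr]; positivity
  have hrr2 : rr < 2 := by
    rw [hrr]
    calc s⁻¹ < ((1:ℝ)/2)⁻¹ := by
          apply inv_strictAnti₀ (by norm_num) hs_half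
      _ = 2 := by norm_num
  have hsum1 : 1 / rr + 1 / p + 1 / q = 1 := by
    rw [hrr, one_div, inv_inv, hs]; ring
  -- ENNReal exponent bookkeeping
  set P1 : ENNReal := (1 / ENNReal.ofReal p + 1 / ENNReal.ofReal q)⁻¹ with hP1
  have hofr : ∀ x : ℝ, 0 < x → 1 / ENNReal.ofReal x = ENNReal.ofReal (1 / x) := by
    intro x hx
    rw [one_div, one_div, ← ENNReal.ofReal_inv_of_pos hx]
  have hP1eq : 1 / P1 = 1 / ENNReal.ofReal p + 1 / ENNReal.ofReal q := by
    rw [hP1, one_div, inv_inv]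
  have hone : (1 : ENNReal) / 1 = 1 / ENNReal.ofReal rr + 1 / P1 := by
    rw [hP1eq, hofr p hp0, hofr q hq0, hofr rr hrr0,
      ← ENNReal.ofReal_add (by positivity) (by positivity),
      ← ENNReal.ofReal_add (by positivity) (by positivity)]
    rw [show 1 / rr + (1 / p + 1 / q) = 1 by linarith [hsum1]]
    simp
  -- membership facts
  have hμfun : (fun z => (μ z - 1) + 1) = μ := by funext z; simp
  have hμaesm : AEStronglyMeasurable μ (volume : Measure ℂ) := by
    rw [← hμfun]
    exact hμmem.1.add aestronglyMeasurable_const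
  have hμmem' : MemLp μ (ENNReal.ofReal q) ((volume : Measure ℂ).restrict Kc) := by
    rw [← hμfun]
    exact (hμmem.restrict Kc).add (memLp_const 1)
  have hqmem : MemLp qf (ENNReal.ofReal p) ((volume : Measure ℂ).restrict Kc) :=
    hQp.restrict Kc
  -- the main integrability fact
  have hgint : ∀ z : ℂ, Integrable (fun z' => Kker z z' • (Q z' * matConj (μ z')))
      (volume : Measure ℂ) := by
    intro z
    have hKcz : Kc ⊆ closedBall z (R0 + ‖z‖) := by
      intro x hx
      have hx0 : ‖x‖ ≤ R0 := by simpa [mem_closedBall_zero_iff] using hR0 hx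
      have : dist x z ≤ ‖x‖ + ‖z‖ := by
        rw [dist_eq_norm]; exact norm_sub_le x z
      exact mem_closedBall.2 (by linarith)
    have hkermem : MemLp (fun x : ℂ => ‖x - z‖⁻¹) (ENNReal.ofReal rr)
        ((volume : Measure ℂ).restrict Kc) :=
      memLp_riesz z hrr0 hrr2 (by positivity) hKcz
    have m1 : MemLp (qf • μ) P1 ((volume : Measure ℂ).restrict Kc) :=
      hμmem'.smul hqmem (hpqr := ⟨by simpa [one_div] using hP1eq.symm⟩)
    have m2 : MemLp ((fun x : ℂ => ‖x - z‖⁻¹) • (qf • μ)) 1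
        ((volume : Measure ℂ).restrict Kc) :=
      m1.smul hkermem (hpqr := ⟨by simpa [one_div] using hone.symm⟩)
    have hGint : Integrable (fun x : ℂ => ‖x - z‖⁻¹ • (qf x • μ x))
        ((volume : Measure ℂ).restrict Kc) := memLp_one_iff_integrable.mp m2
    set C : ℝ := Real.pi⁻¹ * Real.exp (‖k‖ * R0) with hC
    -- measurability
    have hKmeas : AEStronglyMeasurable (fun z' => Kker z z')
        ((volume : Measure ℂ).restrict Kc) := by
      apply Measurable.aestronglyMeasurable
      apply Measurable.mul
      · exact (measurable_const.mul (measurable_const.sub measurable_id)).inv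
      · have hcont : Continuous fun z' : ℂ =>
            Complex.exp (-(((Complex.I * (starRingEnd ℂ) k * z').re : ℝ) : ℂ)) := by fun_prop
        exact hcont.measurable
    have hQmatmeas : AEStronglyMeasurable (fun z' => Q z' * matConj (μ z'))
        ((volume : Measure ℂ).restrict Kc) := by
      have : (fun z' => Q z' * matConj (μ z')) =
          fun z' => qf z' • (mulJL ε (matConjL (μ z'))) := by
        funext z'
        rw [hQfact z', Matrix.smul_mul]
        rfl
      rw [this]
      exact (hQp.1.restrict.smul
        (((mulJL ε).continuous.comp matConjL.continuous).comp_aestronglyMeasurable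
          (hμaesm.restrict)))
    have hgmeas : AEStronglyMeasurable (fun z' => Kker z z' • (Q z' * matConj (μ z')))
        ((volume : Measure ℂ).restrict Kc) := hKmeas.smul hQmatmeas
    -- the bound
    have hbd : ∀ᵐ z' ∂((volume : Measure ℂ).restrict Kc),
        ‖Kker z z' • (Q z' * matConj (μ z'))‖ ≤ C * ‖‖z' - z‖⁻¹ • (qf z' • μ z')‖ := by
      filter_upwards [ae_restrict_mem hKcm] with z' hz'
      have hz'R : ‖z'‖ ≤ R0 := by
        simpa [mem_closedBall_zero_iff] using hR0 hz'
      have hKbd : ‖Kker z z'‖ ≤ Real.pi⁻¹ * ‖z' - z‖⁻¹ * Real.exp (‖k‖ * R0) := by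
        rw [hKker]
        simp only [norm_mul]
        have e1 : ‖(((Real.pi : ℂ)) * (z - z'))⁻¹‖ = Real.pi⁻¹ * ‖z' - z‖⁻¹ := by
          rw [norm_inv, norm_mul, mul_inv, norm_sub_rev]
          simp [Real.pi_nonneg, abs_of_nonneg]
        have e2 : ‖Complex.exp (-(((Complex.I * (starRingEnd ℂ) k * z').re : ℝ) : ℂ))‖
            ≤ Real.exp (‖k‖ * R0) := by
          rw [Complex.norm_exp]
          apply Real.exp_le_exp.2
          have h1 : ((-(((Complex.I * (starRingEnd ℂ) k * z').re : ℝ) : ℂ)).re)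
              = -(Complex.I * (starRingEnd ℂ) k * z').re := by simp
          rw [h1]
          have h2 : |(Complex.I * (starRingEnd ℂ) k * z').re|
              ≤ ‖Complex.I * (starRingEnd ℂ) k * z'‖ :=
            Complex.abs_re_le_norm _
          have h3 : ‖Complex.I * (starRingEnd ℂ) k * z'‖
              = ‖k‖ * ‖z'‖ := by
            simp [map_mul]
          have h4 : ‖k‖ * ‖z'‖ ≤ ‖k‖ * R0 :=
            mul_le_mul_of_nonneg_left hz'R (norm_nonneg k)
          calc -(Complex.I * (starRingEnd ℂ) k * z').re
              ≤ |(Complex.I * (starRingEnd ℂ) k * z').re| := neg_le_abs _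
            _ ≤ ‖k‖ * R0 := by rw [h3] at h2; linarith
        calc ‖(((Real.pi : ℂ)) * (z - z'))⁻¹‖ *
              ‖Complex.exp (-(((Complex.I * (starRingEnd ℂ) k * z').re : ℝ) : ℂ))‖
            ≤ (Real.pi⁻¹ * ‖z' - z‖⁻¹) * Real.exp (‖k‖ * R0) := by
              rw [e1]
              exact mul_le_mul_of_nonneg_left e2 (by positivity)
          _ = Real.pi⁻¹ * ‖z' - z‖⁻¹ * Real.exp (‖k‖ * R0) := by ring
      have hQbd : ‖Q z' * matConj (μ z')‖ ≤ ‖qf z'‖ * ‖μ z'‖ := by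
        rw [hQfact z', Matrix.smul_mul, norm_smul]
        exact mul_le_mul_of_nonneg_left (norm_Jm_mul_matConj_le hεabs _) (norm_nonneg _)
      have hGnorm : ‖‖z' - z‖⁻¹ • (qf z' • μ z')‖ = ‖z' - z‖⁻¹ * (‖qf z'‖ * ‖μ z'‖) := by
        rw [norm_smul, norm_smul]
        simp [abs_of_nonneg, Real.norm_eq_abs]
      rw [norm_smul, hGnorm]
      calc ‖Kker z z'‖ * ‖Q z' * matConj (μ z')‖
          ≤ (Real.pi⁻¹ * ‖z' - z‖⁻¹ * Real.exp (‖k‖ * R0)) * (‖qf z'‖ * ‖μ z'‖) := by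
            apply mul_le_mul hKbd hQbd (norm_nonneg _) (by positivity)
        _ = C * (‖z' - z‖⁻¹ * (‖qf z'‖ * ‖μ z'‖)) := by rw [hC]; ring
    have hint_on : IntegrableOn (fun z' => Kker z z' • (Q z' * matConj (μ z'))) Kc
        (volume : Measure ℂ) := by
      apply Integrable.mono' (hGint.norm.const_mul C) hgmeas
      filter_upwards [hbd] with z' h using h
    have hsupp : Function.support (fun z' => Kker z z' • (Q z' * matConj (μ z'))) ⊆ Kc := by
      intro z' hz'
      by_contra hnot
      apply hz'
      have : Q z' = 0 := image_eq_zero_of_notMem_tsupport hnot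
      simp [this]
    exact (integrableOn_iff_integrable_of_support_subset hsupp).mp hint_on
  have hgνint : ∀ z : ℂ, Integrable (fun z' => Kker z z' • (Q z' * matConj (ν z')))
      (volume : Measure ℂ) := by
    intro z
    have := (S.toContinuousLinearMap).integrable_comp (hgint z)
    apply this.congr
    exact Eventually.of_forall fun z' => hScomm z z' (μ z')
  -- the difference
  set φ : ℂ → M2 := fun z => μ z - ν z with hφ
  have hφeq : ∀ z : ℂ, φ z = ∫ z' : ℂ, Kker z z' • (Q z' * matConj (φ z')) := by
    intro z
    have e : φ z = (∫ z' : ℂ, Kker z z' • (Q z' * matConj (μ z')))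
        - ∫ z' : ℂ, Kker z z' • (Q z' * matConj (ν z')) := by
      rw [hφ]
      simp only []
      rw [hμ z, hνeq z]
      abel
    rw [e, ← integral_sub (hgint z) (hgνint z)]
    apply integral_congr_ae
    apply Eventually.of_forall
    intro z'
    rw [hφ]
    simp only []
    rw [matConj_sub, mul_sub, smul_sub]
  have hφmem : MemLp φ (ENNReal.ofReal q) (volume : Measure ℂ) := by
    have h2 := (S.toContinuousLinearMap).comp_memLp' hμmem
    have h3 := hμmem.sub h2
    apply MemLp.ae_eq _ h3
    apply Eventually.of_forall
    intro z
    show (μ z - 1) - S.toContinuousLinearMap ((fun z => μ z - 1) z) = φ z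
    simp only [ContinuousLinearEquiv.coe_coe, hφ]
    show (μ z - 1) - S (μ z - 1) = μ z - ν z
    rw [map_sub, hS1]
    abel
  -- kernel triviality
  have hφ0 : ∀ z : ℂ, φ z = 0 := by
    by_contra hcon
    push_neg at hcon
    apply hk
    refine ⟨φ, ?_, ⟨q, hq2, hφmem⟩, fun z => hφeq z⟩
    intro h0
    obtain ⟨z, hz⟩ := hcon
    exact hz (by rw [h0]; rfl)
  -- conclusion
  intro z
  have hμν : μ z = ν z := sub_eq_zero.mp (hφ0 z)
  have hνz : ν z = Jm ε * μ z * Jm' ε := by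
    rw [hν]; exact Sequiv_apply ε hε2 (μ z)
  constructor
  · calc μ z 0 0 = (Jm ε * μ z * Jm' ε) 0 0 := by rw [← hνz, ← hμν]
      _ = μ z 1 1 := S_entry00 ε (μ z)
  · calc μ z 0 1 = (Jm ε * μ z * Jm' ε) 0 1 := by rw [← hνz, ← hμν]
      _ = ε * μ z 1 0 := S_entry01 ε (μ z)


end
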